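/- Let n ≥ 10^6, let B ~ Bin(n, 1/2) and B' ~ Bin(n−1, 1/2). Let U be the smallest integer c such that Pr[B > c] ≤ 1/(3·e²·n·√6), and let L be the smallest integer c such that Pr[B > c] < 1/(n·√2). Then for every integer x with L + 1 ≤ x ≤ U, it holds that Pr[B' = x] ≥ (2/3) · Pr[B = x]. -/

import Mathlib

section AuxStmt17

private lemma half_step17 (n k : ℕ) (h : 2 * (n - k) ≤ k + 1) :
    2 * n.choose (k+1) ≤ n.choose k := by
  have hid := Nat.choose_succ_right_eq n k
  have h2 : 2 * n.choose (k+1) * (k+1) ≤ n.choose k * (k+1) := by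
    calc 2 * n.choose (k+1) * (k+1) = 2 * (n.choose (k+1) * (k+1)) := by ring
    _ = 2 * (n.choose k * (n - k)) := by rw [hid]
    _ = n.choose k * (2 * (n - k)) := by ring
    _ ≤ n.choose k * (k+1) := Nat.mul_le_mul_left _ h
  exact Nat.le_of_mul_le_mul_right h2 (Nat.succ_pos k)

private lemma twothird_step17 (n k : ℕ) (h : 3 * (n - k) ≤ 2 * (k + 1)) :
    3 * n.choose (k+1) ≤ 2 * n.choose k := by
  have hid := Nat.choose_succ_right_eq n k
  have h2 : 3 * n.choose (k+1) * (k+1) ≤ 2 * n.choose k * (k+1) := by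
    calc 3 * n.choose (k+1) * (k+1) = 3 * (n.choose (k+1) * (k+1)) := by ring
    _ = n.choose k * (3 * (n - k)) := by rw [hid]; ring
    _ ≤ n.choose k * (2 * (k+1)) := Nat.mul_le_mul_left _ h
    _ = 2 * n.choose k * (k+1) := by ring
  exact Nat.le_of_mul_le_mul_right h2 (Nat.succ_pos k)

private lemma pow_twothird17 (n a : ℕ) (ha : 3 * n ≤ 5 * a) :
    ∀ i, 3 ^ i * n.choose (a + i) ≤ 2 ^ i * n.choose a := by
  intro i
  induction i with
  | zero => simp
  | succ i ih =>
    have hstep : 3 * n.choose (a + i + 1) ≤ 2 * n.choose (a + i) :=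
      twothird_step17 n (a + i) (by omega)
    calc 3 ^ (i+1) * n.choose (a + (i+1)) = 3 ^ i * (3 * n.choose (a + i + 1)) := by
          rw [show a + (i+1) = a + i + 1 by ring]; ring
    _ ≤ 3 ^ i * (2 * n.choose (a + i)) := Nat.mul_le_mul_left _ hstep
    _ = 2 * (3 ^ i * n.choose (a + i)) := by ring
    _ ≤ 2 * (2 ^ i * n.choose a) := Nat.mul_le_mul_left _ ih
    _ = 2 ^ (i+1) * n.choose a := by ring

private lemma geom_tail17 (n : ℕ) : ∀ j b, (2 * n + 1 ≤ 3 * b) →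
    ∑ k ∈ Finset.Icc b (b + j), n.choose k ≤ 2 * n.choose b := by
  intro j
  induction j with
  | zero => intro b hb; simp; omega
  | succ j ih =>
    intro b hb
    have hsplit : Finset.Icc b (b + (j+1)) = Finset.cons b (Finset.Ioc b (b + (j+1))) (by simp) :=
      Finset.Icc_eq_cons_Ioc (by omega)
    rw [hsplit, Finset.sum_cons, ← Finset.Icc_add_one_left_eq_Ioc]
    have h2 : ∑ k ∈ Finset.Icc (b+1) ((b+1) + j), n.choose k ≤ 2 * n.choose (b+1) :=
      ih (b+1) (by omega)
    have hh : 2 * n.choose (b + 1) ≤ n.choose b := half_step17 n b (by omega)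
    have : (b+1) + j = b + (j+1) := by ring
    rw [this] at h2
    omega

private lemma choose_le_two_pow17 (n a : ℕ) : n.choose a ≤ 2 ^ n := by
  rcases le_or_gt a n with h | h
  · calc n.choose a ≤ ∑ m ∈ Finset.range (n + 1), n.choose m :=
        Finset.single_le_sum (fun i _ => Nat.zero_le _) (by simp [Finset.mem_range]; omega)
    _ = 2 ^ n := Nat.sum_range_choose n
  · rw [Nat.choose_eq_zero_of_lt h]; positivity

private lemma pow3_lb17 : ∀ m, 5 ≤ m → m * (m-1) * 2 ^ (m-3) ≤ 3 ^ m := by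
  intro m
  induction m with
  | zero => omega
  | succ m ih =>
    intro hm
    rcases Nat.lt_or_ge m 5 with h5 | h5
    · interval_cases m <;> simp_all
    · have ihm := ih h5
      have e1 : m + 1 - 3 = (m - 3) + 1 := by omega
      calc (m+1) * (m+1-1) * 2 ^ (m+1-3) = ((m+1) * m * 2) * 2 ^ (m-3) := by
            rw [e1, pow_succ, show m+1-1 = m from rfl]; ring
      _ ≤ (3 * (m * (m-1))) * 2 ^ (m-3) := by
            apply Nat.mul_le_mul_right
            have h6 : 2 * (m+1) ≤ 3 * (m - 1) := by omega
            calc (m+1) * m * 2 = m * (2 * (m+1)) := by ring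
            _ ≤ m * (3 * (m-1)) := Nat.mul_le_mul_left _ h6
            _ = 3 * (m * (m-1)) := by ring
      _ = 3 * (m * (m-1) * 2 ^ (m-3)) := by ring
      _ ≤ 3 * 3 ^ m := Nat.mul_le_mul_left _ ihm
      _ = 3 ^ (m+1) := by ring

private lemma tail_bound17 (n : ℕ) (hn : 10 ^ 6 ≤ n) :
    72 * n * (∑ k ∈ Finset.Icc (2 * n / 3 + 1) n, n.choose k) ≤ 2 ^ n := by
  set c := 2 * n / 3 with hc
  set a := 3 * n / 5 + 1 with ha
  have h3 := Nat.div_add_mod (2*n) 3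
  have h3m : (2*n) % 3 < 3 := Nat.mod_lt _ (by norm_num)
  have h5 := Nat.div_add_mod (3*n) 5
  have h5m : (3*n) % 5 < 5 := Nat.mod_lt _ (by norm_num)
  have hc3 : 3 * c ≤ 2 * n := by omega
  have hc3' : 2 * n < 3 * c + 3 := by omega
  have ha5 : 3 * n + 1 ≤ 5 * a := by omega
  have ha5' : 5 * a ≤ 3 * n + 5 := by omega
  have hac : a ≤ c + 1 := by omega
  set m := c + 1 - a with hm
  have hm15 : n ≤ 15 * m + 10 := by omega
  have hmge : 66666 ≤ m := by omega
  have hcn : c + 1 ≤ n := by omega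
  have hS : ∑ k ∈ Finset.Icc (c + 1) n, n.choose k ≤ 2 * n.choose (c+1) := by
    have := geom_tail17 n (n - (c+1)) (c+1) (by omega)
    rwa [show (c+1) + (n - (c+1)) = n by omega] at this
  have hP : 3 ^ m * n.choose (c+1) ≤ 2 ^ m * 2 ^ n := by
    have h1 := pow_twothird17 n a (by omega) m
    rw [show a + m = c + 1 by omega] at h1
    exact h1.trans (Nat.mul_le_mul_left _ (choose_le_two_pow17 n a))
  have hE : 144 * n * 2 ^ m ≤ 3 ^ m := by
    have h1 : 1152 * n ≤ m * (m - 1) := by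
      have h2 : 17281 ≤ m - 1 := by omega
      have h3 : m * 17281 ≤ m * (m-1) := Nat.mul_le_mul_left m h2
      nlinarith [h3]
    calc 144 * n * 2 ^ m = 1152 * n * 2 ^ (m - 3) := by
          conv_lhs => rw [show m = (m-3) + 3 by omega, pow_add]
          ring
    _ ≤ m * (m-1) * 2 ^ (m-3) := Nat.mul_le_mul_right _ h1
    _ ≤ 3 ^ m := pow3_lb17 m (by omega)
  set S := ∑ k ∈ Finset.Icc (c + 1) n, n.choose k with hSdef
  have key : (72 * n * S) * (2 * 2 ^ m) ≤ 2 ^ n * (2 * 2 ^ m) := by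
    calc (72 * n * S) * (2 * 2 ^ m) = S * (144 * n * 2 ^ m) := by ring
    _ ≤ S * 3 ^ m := Nat.mul_le_mul_left _ hE
    _ ≤ (2 * n.choose (c+1)) * 3 ^ m := Nat.mul_le_mul_right _ hS
    _ = 2 * (3 ^ m * n.choose (c+1)) := by ring
    _ ≤ 2 * (2 ^ m * 2 ^ n) := Nat.mul_le_mul_left _ hP
    _ = 2 ^ n * (2 * 2 ^ m) := by ring
  exact Nat.le_of_mul_le_mul_right key (by positivity)

private lemma pascal3_17 (n x : ℕ) (h3 : 3 * x ≤ 2 * n) (hn : 1 ≤ n) :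
    n.choose x ≤ 3 * (n-1).choose x := by
  rcases x with _ | y
  · simp
  · have hx : y + 1 ≤ n := by omega
    have hpas : n.choose (y+1) = (n-1).choose y + (n-1).choose (y+1) := by
      conv_lhs => rw [show n = (n-1) + 1 by omega]
      exact Nat.choose_succ_succ (n-1) y
    have hid := Nat.choose_succ_right_eq (n-1) y
    have hle : y + 1 ≤ 2 * ((n-1) - y) := by omega
    have hmul : (n-1).choose y * (y+1) ≤ 2 * (n-1).choose (y+1) * (y+1) := by
      calc (n-1).choose y * (y+1) ≤ (n-1).choose y * (2 * ((n-1) - y)) :=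
            Nat.mul_le_mul_left _ hle
      _ = 2 * ((n-1).choose y * ((n-1) - y)) := by ring
      _ = 2 * ((n-1).choose (y+1) * (y+1)) := by rw [hid]
      _ = 2 * (n-1).choose (y+1) * (y+1) := by ring
    have h2 : (n-1).choose y ≤ 2 * (n-1).choose (y+1) :=
      Nat.le_of_mul_le_mul_right hmul (Nat.succ_pos y)
    omega

end AuxStmt17

/-- The probability mass function of the binomial distribution `Bin(n, p)`:
`Pr[B = k] = C(n,k) p^k (1-p)^(n-k)`. -/
noncomputable def binomPMF (n : ℕ) (p : ℝ) (k : ℕ) : ℝ :=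
  (n.choose k : ℝ) * p ^ k * (1 - p) ^ (n - k)

/-- `Pr[B > c]` for `B ~ Bin(n, p)`. -/
noncomputable def prGT (n : ℕ) (p : ℝ) (c : ℕ) : ℝ :=
  ∑ k ∈ Finset.Icc (c + 1) n, binomPMF n p k

/-- `L` : the smallest integer `c` such that `Pr[B > c] < 1/(n·√2)`
for `B ~ Bin(n, 1/2)`. -/
noncomputable def Lhalf (n : ℕ) : ℕ :=
  sInf {c : ℕ | prGT n (1 / 2) c < 1 / ((n : ℝ) * Real.sqrt 2)}

/-- `U` : the smallest integer `c` such that `Pr[B > c] ≤ 1/(3·e²·n·√6)`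
for `B ~ Bin(n, 1/2)`. -/
noncomputable def Uhalf (n : ℕ) : ℕ :=
  sInf {c : ℕ | prGT n (1 / 2) c ≤ 1 / (3 * Real.exp 1 ^ 2 * (n : ℝ) * Real.sqrt 6)}

/-- For `n ≥ 10^6`, `B ~ Bin(n, 1/2)` and `B' ~ Bin(n−1, 1/2)`, for every integer
`x` with `L + 1 ≤ x ≤ U` it holds that `Pr[B' = x] ≥ (2/3)·Pr[B = x]`. -/
theorem stmt_17 (n : ℕ) (hn : 10 ^ 6 ≤ n) (x : ℕ)
    (hxL : Lhalf n + 1 ≤ x) (hxU : x ≤ Uhalf n) :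
    binomPMF (n - 1) (1 / 2) x ≥ (2 / 3) * binomPMF n (1 / 2) x := by
  have hn0 : 0 < n := by omega
  have hnpos : (0:ℝ) < n := by exact_mod_cast hn0
  -- Step 1: Uhalf n ≤ 2*n/3
  set c := 2 * n / 3 with hc
  have hmem : c ∈ {c : ℕ | prGT n (1 / 2) c ≤ 1 / (3 * Real.exp 1 ^ 2 * (n : ℝ) * Real.sqrt 6)} := by
    have hprGT : prGT n (1/2) c = ((∑ k ∈ Finset.Icc (c + 1) n, n.choose k : ℕ) : ℝ) * (1/2)^n := by
      unfold prGT binomPMF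
      rw [Nat.cast_sum, Finset.sum_mul]
      apply Finset.sum_congr rfl
      intro k hk
      have hkn : k ≤ n := (Finset.mem_Icc.mp hk).2
      have : ((1:ℝ) - 1/2) = 1/2 := by norm_num
      rw [this, mul_assoc, ← pow_add, show k + (n - k) = n by omega]
    set S := ∑ k ∈ Finset.Icc (c + 1) n, n.choose k with hSdef
    have hnat := tail_bound17 n hn
    have hreal : (72:ℝ) * n * S ≤ 2 ^ n := by exact_mod_cast hnat
    have h1 : prGT n (1/2) c ≤ 1 / (72 * (n:ℝ)) := by
      rw [hprGT]
      calc (S:ℝ) * (1/2)^n = (S:ℝ) / 2 ^ n := by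
              rw [one_div, inv_pow]; ring
      _ ≤ 1 / (72 * n) := by
              rw [div_le_div_iff₀ (by positivity) (by positivity)]
              calc (S:ℝ) * (72 * n) = 72 * n * S := by ring
              _ ≤ 2 ^ n := by exact_mod_cast hnat
                    _ = 1 * 2 ^ n := by ring
    have hsqrt6 : Real.sqrt 6 ≤ 2.5 := by
      nlinarith [Real.sq_sqrt (show (0:ℝ) ≤ 6 by norm_num), Real.sqrt_nonneg 6]
    have hexp : Real.exp 1 ^ 2 ≤ 8 := by
      nlinarith [Real.exp_one_lt_d9, Real.exp_pos 1]
    have hden : 3 * Real.exp 1 ^ 2 * (n : ℝ) * Real.sqrt 6 ≤ 72 * n := by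
      have hs0 : (0:ℝ) ≤ Real.sqrt 6 := Real.sqrt_nonneg 6
      have h1 : Real.exp 1 ^ 2 * Real.sqrt 6 ≤ 20 := by
        calc Real.exp 1 ^ 2 * Real.sqrt 6 ≤ 8 * 2.5 :=
              mul_le_mul hexp hsqrt6 hs0 (by norm_num)
        _ = 20 := by norm_num
      calc 3 * Real.exp 1 ^ 2 * (n : ℝ) * Real.sqrt 6
          = (3 * (n:ℝ)) * (Real.exp 1 ^ 2 * Real.sqrt 6) := by ring
      _ ≤ (3 * (n:ℝ)) * 20 := mul_le_mul_of_nonneg_left h1 (by positivity)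
      _ ≤ 72 * (n:ℝ) := by nlinarith [hnpos]
    have hdenpos : (0:ℝ) < 3 * Real.exp 1 ^ 2 * (n : ℝ) * Real.sqrt 6 := by
      have : (0:ℝ) < Real.sqrt 6 := Real.sqrt_pos.mpr (by norm_num)
      positivity
    exact h1.trans (one_div_le_one_div_of_le hdenpos hden)
  have hU : Uhalf n ≤ c := Nat.sInf_le hmem
  have hxc : x ≤ c := hxU.trans hU
  -- arithmetic about c
  have h3 := Nat.div_add_mod (2*n) 3
  have h3m : (2*n) % 3 < 3 := Nat.mod_lt _ (by norm_num)
  have h3x : 3 * x ≤ 2 * n := by omega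
  have hxn : x + 1 ≤ n := by omega
  -- Step 2: pmf comparison
  have hcast : ((n.choose x : ℕ) : ℝ) ≤ 3 * ((n-1).choose x : ℝ) := by
    exact_mod_cast pascal3_17 n x h3x (by omega)
  unfold binomPMF
  have hhalf : ((1:ℝ) - 1/2) = 1/2 := by norm_num
  rw [hhalf]
  have e1 : ((n-1).choose x : ℝ) * (1/2)^x * (1/2)^((n-1)-x) = ((n-1).choose x : ℝ) * (1/2)^(n-1) := by
    rw [mul_assoc, ← pow_add, show x + ((n-1) - x) = n - 1 by omega]
  have e2 : ((n).choose x : ℝ) * (1/2)^x * (1/2)^(n-x) = ((n).choose x : ℝ) * (1/2)^n := by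
    rw [mul_assoc, ← pow_add, show x + (n - x) = n by omega]
  rw [e1, e2]
  have e3 : ((1:ℝ)/2)^(n-1) = 2 * (1/2)^n := by
    rw [show n = (n-1) + 1 by omega, pow_succ, show (n-1)+1-1 = n-1 by omega]
    ring
  rw [e3, ge_iff_le]
  have hpow : (0:ℝ) < (1/2)^n := by positivity
  calc 2/3 * (((n).choose x : ℝ) * (1/2)^n) = (n.choose x : ℝ) * (1/2)^n * (2/3) := by ring
  _ ≤ (3 * ((n-1).choose x : ℝ)) * (1/2)^n * (2/3) := by
        apply mul_le_mul_of_nonneg_right _ (by norm_num)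
        exact mul_le_mul_of_nonneg_right hcast hpow.le
  _ = ((n-1).choose x : ℝ) * (2 * (1/2)^n) := by ring
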